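/- Let φ be an automorphism of a group H such that H has infinitely many φ-twisted conjugacy classes. Then the semidirect product H ⋊_φ ℤ does not have BVC. -/

import Mathlib

def IsVirtuallyCyclic (G : Type*) [Group G] : Prop :=
  ∃ H : Subgroup G, IsCyclic H ∧ H.FiniteIndex

def HasBVC (G : Type*) [Group G] : Prop :=
  ∃ S : Finset (Subgroup G), (∀ V ∈ S, IsVirtuallyCyclic V) ∧
    ∀ W : Subgroup G, IsVirtuallyCyclic W →
      ∃ V ∈ S, ∃ g : G, W.map (MulAut.conj g).toMonoidHom ≤ V

section aux

variable {H : Type*} [Group H] (φ : MulAut H)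

/-- twisted conjugacy relation -/
def TRel (a b : H) : Prop := ∃ x : H, a = x * b * (φ x)⁻¹

lemma trel_symm {a b : H} (h : TRel φ a b) : TRel φ b a := by
  obtain ⟨x, hx⟩ := h
  refine ⟨x⁻¹, ?_⟩
  rw [hx, map_inv]
  group

lemma trel_trans {a b c : H} (h1 : TRel φ a b) (h2 : TRel φ b c) : TRel φ a c := by
  obtain ⟨x, hx⟩ := h1
  obtain ⟨y, hy⟩ := h2
  refine ⟨x * y, ?_⟩
  rw [hx, hy, map_mul]
  group

lemma trel_apply (a : H) : TRel φ (φ a) a := ⟨a⁻¹, by rw [map_inv]; group⟩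

lemma trel_inv_apply (a : H) : TRel φ (φ⁻¹ a) a :=
  ⟨φ⁻¹ a, by rw [MulAut.apply_inv_self]; group⟩

lemma trel_zpow (a : H) : ∀ n : ℤ, TRel φ ((φ ^ n) a) a := by
  intro n
  induction n using Int.induction_on with
  | zero => exact ⟨1, by simp⟩
  | succ n ih =>
      have h1 : (φ ^ ((n : ℤ) + 1)) a = φ ((φ ^ (n : ℤ)) a) := by
        rw [add_comm, zpow_one_add]; rfl
      rw [h1]
      exact trel_trans φ (trel_apply φ _) ih
  | pred n ih =>
      have h1 : (φ ^ (-(n : ℤ) - 1)) a = φ⁻¹ ((φ ^ (-(n : ℤ))) a) := by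
        rw [show (-(n:ℤ) - 1) = -1 + -n by ring, zpow_add, zpow_neg_one]; rfl
      rw [h1]
      exact trel_trans φ (trel_inv_apply φ _) ih

/-- In a virtually cyclic group, the fiber of a hom to `ℤ` over `ofAdd 1` is finite. -/
lemma fiber_finite {Γ : Type*} [Group Γ] (hvc : IsVirtuallyCyclic Γ)
    (ψ : Γ →* Multiplicative ℤ) :
    {x : Γ | ψ x = Multiplicative.ofAdd 1}.Finite := by
  rcases Set.eq_empty_or_nonempty {x : Γ | ψ x = Multiplicative.ofAdd 1} with he | hne
  · rw [he]; exact Set.finite_empty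
  obtain ⟨v₀, hv₀⟩ := hne
  obtain ⟨C, hC, hCfi⟩ := hvc
  obtain ⟨c, hc⟩ := hC.exists_generator
  have hrange : ψ.range = ⊤ := by
    rw [eq_top_iff]
    intro z _
    have hv₀' : ψ v₀ = Multiplicative.ofAdd 1 := hv₀
    refine ⟨v₀ ^ (Multiplicative.toAdd z), ?_⟩
    rw [map_zpow, hv₀']
    apply Multiplicative.toAdd.injective
    rw [toAdd_zpow]
    simp
  have hψc : ψ (c : Γ) ≠ 1 := by
    intro h1
    have hle : C ≤ ψ.ker := by
      intro x hx
      obtain ⟨n, hn⟩ := hc ⟨x, hx⟩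
      have : ((c : Γ)) ^ n = x := by
        have := congrArg (Subtype.val) hn
        simpa using this
      rw [MonoidHom.mem_ker, ← this, map_zpow, h1, one_zpow]
    have hdvd := Subgroup.index_dvd_of_le hle
    have hne0 : ψ.ker.index ≠ 0 := fun h0 => hCfi.index_ne_zero (by rwa [h0, zero_dvd_iff] at hdvd)
    apply hne0
    rw [Subgroup.index_ker, hrange, Subgroup.card_top]
    exact Nat.card_eq_zero_of_infinite
  have hfinQ : Finite (Γ ⧸ C) := by
    have := hCfi.index_ne_zero
    exact Nat.finite_of_card_ne_zero this
  have hker : Finite ψ.ker := by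
    apply Finite.of_injective (fun k : ψ.ker => (QuotientGroup.mk (k : Γ) : Γ ⧸ C))
    intro a b hab
    rw [QuotientGroup.eq] at hab
    obtain ⟨n, hn⟩ := hc ⟨_, hab⟩
    have hcn : ((c : Γ)) ^ n = (a : Γ)⁻¹ * b := by
      have := congrArg (Subtype.val) hn
      simpa using this
    have h1 : (ψ (c : Γ)) ^ n = 1 := by
      rw [← map_zpow, hcn, map_mul, map_inv, a.2, b.2, inv_one, one_mul]
    have hn0 : n = 0 := by
      by_contra h
      apply hψc
      have := congrArg Multiplicative.toAdd h1
      rw [toAdd_zpow] at this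
      simp only [toAdd_one] at this
      have : Multiplicative.toAdd (ψ (c : Γ)) = 0 := by
        rcases mul_eq_zero.mp (by exact_mod_cast this) with h' | h'
        · exact absurd h' (by exact_mod_cast h)
        · exact h'
      have := congrArg Multiplicative.ofAdd this
      simpa using this
    rw [hn0, zpow_zero] at hcn
    have : (a : Γ) = b := by
      have := hcn.symm
      rw [inv_mul_eq_one] at this
      exact this.symm ▸ rfl
    exact Subtype.ext this
  have hsub : {x : Γ | ψ x = Multiplicative.ofAdd 1} ⊆ (fun k => v₀ * k) '' (ψ.ker : Set Γ) := by
    intro x hx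
    have hv₀' : ψ v₀ = Multiplicative.ofAdd 1 := hv₀
    have hx' : ψ x = Multiplicative.ofAdd 1 := hx
    refine ⟨v₀⁻¹ * x, ?_, by group⟩
    simp only [SetLike.mem_coe, MonoidHom.mem_ker, map_mul, map_inv, hv₀', hx']
    group
  exact Set.Finite.subset ((Set.toFinite (ψ.ker : Set Γ)).image _) hsub

end aux

/-- If `H` has infinitely many `φ`-twisted conjugacy classes (i.e. no finite set of
elements meets every twisted conjugacy class), then `H ⋊_φ ℤ` does not have BVC. -/
theorem stmt_13 {H : Type*} [Group H] (φ : MulAut H)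
    (hinf : ∀ S : Finset H, ∃ h : H, ∀ g ∈ S, ¬ ∃ x : H, h = x * g * (φ x)⁻¹) :
    ¬ HasBVC (H ⋊[zpowersHom (MulAut H) φ] Multiplicative ℤ) := by
  rintro ⟨S, hScyc, hS⟩
  haveI G' : True := trivial
  -- candidate set
  have hfin : ∀ V ∈ S, {g : H ⋊[zpowersHom (MulAut H) φ] Multiplicative ℤ | g ∈ V ∧ g.right = Multiplicative.ofAdd 1}.Finite := by
    intro V hV
    have h1 : {g : H ⋊[zpowersHom (MulAut H) φ] Multiplicative ℤ | g ∈ V ∧ g.right = Multiplicative.ofAdd 1}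
        = Subtype.val '' {x : ↥V | (SemidirectProduct.rightHom.comp V.subtype) x
            = Multiplicative.ofAdd 1} := by
      ext g
      constructor
      · rintro ⟨hg, hr⟩
        exact ⟨⟨g, hg⟩, hr, rfl⟩
      · rintro ⟨x, hx, rfl⟩
        exact ⟨x.2, hx⟩
    rw [h1]
    exact (fiber_finite (hScyc V hV) _).image _
  set F : Set H := ⋃ V ∈ S, SemidirectProduct.left ''
    {g : H ⋊[zpowersHom (MulAut H) φ] Multiplicative ℤ | g ∈ V ∧ g.right = Multiplicative.ofAdd 1} with hF
  have hFfin : F.Finite :=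
    Set.Finite.biUnion S.finite_toSet (fun V hV => ((hfin V hV).image _))
  obtain ⟨h, hh⟩ := hinf hFfin.toFinset
  -- the infinite cyclic subgroup generated by (h, 1)
  set b : H ⋊[zpowersHom (MulAut H) φ] Multiplicative ℤ := ⟨h, Multiplicative.ofAdd 1⟩ with hb
  have hWvc : IsVirtuallyCyclic ↥(Subgroup.zpowers b) := by
    refine ⟨⊤, ?_, Subgroup.instFiniteIndexTop⟩
    have : IsCyclic ↥(Subgroup.zpowers b) := by
      refine ⟨⟨⟨b, Subgroup.mem_zpowers b⟩, ?_⟩⟩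
      rintro ⟨x, hx⟩
      obtain ⟨n, hn⟩ := hx
      refine ⟨n, Subtype.ext ?_⟩
      rw [SubgroupClass.coe_zpow]
      exact hn
    exact isCyclic_of_surjective (Subgroup.topEquiv.symm.toMonoidHom)
      Subgroup.topEquiv.symm.surjective
  obtain ⟨V, hVS, g, hmap⟩ := hS (Subgroup.zpowers b) hWvc
  set a : H ⋊[zpowersHom (MulAut H) φ] Multiplicative ℤ := g * b * g⁻¹ with ha
  have haV : a ∈ V := hmap ⟨b, Subgroup.mem_zpowers b, by simp [MulAut.conj_apply, ha]⟩
  have har : a.right = Multiplicative.ofAdd 1 := by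
    have : SemidirectProduct.rightHom a = Multiplicative.ofAdd 1 := by
      rw [ha, map_mul, map_mul, map_inv]
      have hbr : SemidirectProduct.rightHom b = Multiplicative.ofAdd 1 := rfl
      rw [hbr, mul_comm (SemidirectProduct.rightHom g), mul_assoc, mul_inv_cancel, mul_one]
    exact this
  have hmem : a.left ∈ hFfin.toFinset := by
    rw [Set.Finite.mem_toFinset, hF]
    exact Set.mem_biUnion hVS ⟨a, ⟨haV, har⟩, rfl⟩
  apply hh a.left hmem
  -- derive twisted conjugacy
  have hag : a * g = g * b := by rw [ha]; group
  have hleft := congrArg SemidirectProduct.left hag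
  simp only [SemidirectProduct.mul_left] at hleft
  rw [har] at hleft
  have hz1 : (zpowersHom (MulAut H) φ) (Multiplicative.ofAdd 1) = φ := by
    rw [zpowersHom_apply]; simp
  rw [hz1] at hleft
  -- hleft : a.left * φ g.left = g.left * (zpowersHom _ φ g.right) h
  have hrel1 : TRel φ a.left ((zpowersHom (MulAut H) φ) g.right h) := by
    refine ⟨g.left, ?_⟩
    rw [← hleft]
    group
  have hrel2 : TRel φ ((zpowersHom (MulAut H) φ) g.right h) h := by
    rw [zpowersHom_apply]
    exact trel_zpow φ h _
  exact trel_symm φ (trel_trans φ hrel1 hrel2)
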